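/- Let f: R^e → R^e have components f_i(q) = r_i q_i |q_i|^{x−1} with r_i > 0 and x > 1. For any q_d ∈ R^e, any q₀ ∈ R^e with max_i |q₀ᵢ| sufficiently large (so that (1/4)|q₀ⱼ| > |q_dⱼ| for j = argmax_i |q₀ᵢ|), one has ⟨f(q_d + q₀) − f(q_d), q₀⟩ ≥ x · r_j · |q₀ⱼ|^{x+1} · ∫_{1/2}^1 (t − 1/4)^{x−1} dt, where j = argmax_i |q₀ᵢ|. -/

import Mathlib

open Matrix

set_option maxHeartbeats 1000000

lemma hw_habs (x : ℝ) (hx : 1 < x) (s : ℝ) (hs : 0 ≤ s) :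
    s * |s| ^ (x - 1) = s ^ x := by
  rcases eq_or_lt_of_le hs with h | h
  · simp [← h, Real.zero_rpow (show x ≠ 0 by linarith),
      Real.zero_rpow (show x - 1 ≠ 0 by intro hh; linarith)]
  · rw [abs_of_pos h]
    nth_rewrite 1 [← Real.rpow_one s]
    rw [← Real.rpow_add h]
    ring_nf

lemma hw_hodd (x : ℝ) (u : ℝ) : (-u) * |(-u)| ^ (x - 1) = -(u * |u| ^ (x - 1)) := by
  rw [abs_neg]; ring

lemma hw_mono (x : ℝ) (hx : 1 < x) : Monotone (fun s : ℝ => s * |s| ^ (x - 1)) := by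
  intro s t hst
  simp only
  rcases le_total 0 s with hs | hs
  · rw [hw_habs x hx s hs, hw_habs x hx t (hs.trans hst)]
    exact Real.rpow_le_rpow hs hst (by linarith)
  · rcases le_total t 0 with ht | ht
    · have h1 : (-t) ^ x ≤ (-s) ^ x :=
        Real.rpow_le_rpow (by linarith) (by linarith) (by linarith)
      have h2 : (-t) * |(-t)| ^ (x - 1) ≤ (-s) * |(-s)| ^ (x - 1) := by
        rw [hw_habs x hx _ (by linarith : (0:ℝ) ≤ -t),
          hw_habs x hx _ (by linarith : (0:ℝ) ≤ -s)]
        exact h1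
      rw [hw_hodd, hw_hodd] at h2
      linarith
    · have h1 : s * |s| ^ (x - 1) ≤ 0 :=
        mul_nonpos_of_nonpos_of_nonneg hs (Real.rpow_nonneg (abs_nonneg s) _)
      have h2 : 0 ≤ t * |t| ^ (x - 1) :=
        mul_nonneg ht (Real.rpow_nonneg (abs_nonneg t) _)
      linarith

/-- Key pointwise estimate for positive `b`. -/
lemma hw_key (x : ℝ) (hx : 1 < x) (a b : ℝ) (hb : 0 < b) (ha : |a| < (1/4) * b) :
    ((a + b) * |a + b| ^ (x - 1) - a * |a| ^ (x - 1)) ≥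
      ((3/4 : ℝ) ^ x - (1/4 : ℝ) ^ x) * b ^ x := by
  have habs := abs_le.mp ha.le
  have h1 : (0:ℝ) ≤ (3/4) * b := by linarith
  have hab : (3/4) * b ≤ a + b := by linarith
  have hub : (a + b) * |a + b| ^ (x - 1) ≥ ((3/4 : ℝ)) ^ x * b ^ x := by
    rw [hw_habs x hx _ (by linarith : (0:ℝ) ≤ a + b),
      ← Real.mul_rpow (by norm_num) hb.le]
    exact Real.rpow_le_rpow h1 hab (by linarith)
  have hlb : a * |a| ^ (x - 1) ≤ ((1/4 : ℝ)) ^ x * b ^ x := by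
    have h2 : a * |a| ^ (x - 1) ≤ |a| * |a| ^ (x - 1) :=
      mul_le_mul_of_nonneg_right (le_abs_self a) (Real.rpow_nonneg (abs_nonneg a) _)
    have h3 : |a| * |a| ^ (x - 1) = |a| ^ x := by
      have := hw_habs x hx |a| (abs_nonneg a); rwa [abs_abs] at this
    have h4 : |a| ^ x ≤ ((1/4) * b) ^ x :=
      Real.rpow_le_rpow (abs_nonneg a) ha.le (by linarith)
    rw [Real.mul_rpow (by norm_num) hb.le] at h4
    linarith
  linarith

/-- Each term of the sum is nonnegative. -/
lemma hw_term_nonneg (x : ℝ) (hx : 1 < x) (a b : ℝ) :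
    0 ≤ ((a + b) * |a + b| ^ (x - 1) - a * |a| ^ (x - 1)) * b := by
  rcases le_total 0 b with hb | hb
  · have := hw_mono x hx (show a ≤ a + b by linarith)
    simp only at this
    exact mul_nonneg (by linarith) hb
  · have := hw_mono x hx (show a + b ≤ a by linarith)
    simp only at this
    nlinarith

/-- Coercivity lower bound for the Hazen-Williams nonlinearity: if `j`
maximizes `|q₀ᵢ|` and `(1/4)|q₀ⱼ| > |q_dⱼ|`, then
`⟨f(q_d + q₀) − f(q_d), q₀⟩ ≥ x r_j |q₀ⱼ|^{x+1} ∫_{1/2}^1 (t − 1/4)^{x−1} dt`. -/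
theorem hazen_williams_coercivity_bound
    {E : Type*} [Fintype E] (r : E → ℝ) (hr : ∀ i, 0 < r i) (x : ℝ) (hx : 1 < x)
    (f : (E → ℝ) → (E → ℝ))
    (hf : ∀ q i, f q i = r i * q i * |q i| ^ (x - 1))
    (qd q₀ : E → ℝ) (j : E)
    (hmax : ∀ i, |q₀ i| ≤ |q₀ j|)
    (hlarge : |qd j| < (1/4) * |q₀ j|) :
    (f (qd + q₀) - f qd) ⬝ᵥ q₀ ≥
      x * r j * |q₀ j| ^ (x + 1) * ∫ t in (1/2 : ℝ)..1, (t - 1/4) ^ (x - 1) := by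
  have hx0 : (0 : ℝ) < x := by linarith
  have hb0 : 0 < |q₀ j| := by
    have := abs_nonneg (qd j); linarith
  -- compute the integral
  have hint : (∫ t in (1/2 : ℝ)..1, (t - 1/4) ^ (x - 1)) =
      ((3/4 : ℝ) ^ x - (1/4 : ℝ) ^ x) / x := by
    have hxne : x ≠ 0 := by linarith
    have hderiv : ∀ t ∈ Set.uIcc (1/2 : ℝ) 1,
        HasDerivAt (fun s : ℝ => (s - 1/4) ^ x / x) ((t - 1/4) ^ (x - 1)) t := by
      intro t ht
      rw [Set.uIcc_of_le (by norm_num)] at ht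
      have htpos : (0:ℝ) < t - 1/4 := by have := ht.1; linarith
      have h1 : HasDerivAt (fun s : ℝ => s - 1/4) 1 t :=
        (hasDerivAt_id t).sub_const _
      have h2 : HasDerivAt (fun s : ℝ => (s - 1/4) ^ x)
          (1 * x * (t - 1/4) ^ (x - 1)) t :=
        h1.rpow_const (Or.inl htpos.ne')
      have h3 := h2.div_const x
      rw [one_mul, mul_div_cancel_left₀ _ hxne] at h3
      exact h3
    have hcont : ContinuousOn (fun t : ℝ => (t - 1/4) ^ (x - 1))
        (Set.uIcc (1/2:ℝ) 1) := by
      apply ContinuousOn.rpow_const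
      · exact (continuous_id.sub continuous_const).continuousOn
      · intro t ht
        rw [Set.uIcc_of_le (by norm_num)] at ht
        left
        have := ht.1; intro h; linarith [show t - 1/4 = 0 from h]
    rw [intervalIntegral.integral_eq_sub_of_hasDerivAt hderiv
      (hcont.intervalIntegrable)]
    norm_num
    ring
  -- rewrite the dot product as a sum of terms
  have hterm : ∀ i, (f (qd + q₀) - f qd) i * q₀ i =
      r i * (((qd i + q₀ i) * |qd i + q₀ i| ^ (x - 1) -
        qd i * |qd i| ^ (x - 1)) * q₀ i) := by
    intro i
    simp only [Pi.sub_apply, hf, Pi.add_apply]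
    ring
  have hnonneg : ∀ i ∈ Finset.univ (α := E),
      0 ≤ (f (qd + q₀) - f qd) i * q₀ i := by
    intro i _
    rw [hterm i]
    exact mul_nonneg (hr i).le (hw_term_nonneg x hx _ _)
  have hsum : (f (qd + q₀) - f qd) j * q₀ j ≤ (f (qd + q₀) - f qd) ⬝ᵥ q₀ := by
    rw [dotProduct]
    exact Finset.single_le_sum hnonneg (Finset.mem_univ j)
  -- bound the j-th term
  have hjterm : (f (qd + q₀) - f qd) j * q₀ j ≥
      r j * (((3/4 : ℝ) ^ x - (1/4 : ℝ) ^ x) * |q₀ j| ^ (x + 1)) := by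
    rw [hterm j]
    have hpow : |q₀ j| ^ (x + 1) = |q₀ j| ^ x * |q₀ j| := by
      rw [Real.rpow_add hb0, Real.rpow_one]
    apply mul_le_mul_of_nonneg_left _ (hr j).le
    rw [hpow]
    set c : ℝ := (3/4 : ℝ) ^ x - (1/4 : ℝ) ^ x with hc
    set A : ℝ := (qd j + q₀ j) * |qd j + q₀ j| ^ (x - 1) with hA
    set B : ℝ := qd j * |qd j| ^ (x - 1) with hB
    rcases lt_or_gt_of_ne (show q₀ j ≠ 0 by intro h; rw [h] at hb0; simp at hb0)
      with hneg | hpos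
    · -- q₀ j < 0 : use oddness
      have habs : |q₀ j| = -(q₀ j) := abs_of_neg hneg
      have hkey := hw_key x hx (-(qd j)) (-(q₀ j)) (by linarith)
        (by rw [abs_neg, ← habs]; exact hlarge)
      have e1 : -(qd j) + -(q₀ j) = -(qd j + q₀ j) := by ring
      rw [e1, hw_hodd, hw_hodd] at hkey
      have hbx : (-(q₀ j)) ^ x = |q₀ j| ^ x := by rw [habs]
      rw [hbx] at hkey
      have hkey' : c * |q₀ j| ^ x ≤ B - A := by rw [hc, hA, hB]; linarith [hkey]
      calc c * (|q₀ j| ^ x * |q₀ j|) = (c * |q₀ j| ^ x) * |q₀ j| := by ring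
        _ ≤ (B - A) * |q₀ j| :=
            mul_le_mul_of_nonneg_right hkey' (abs_nonneg _)
        _ = (A - B) * q₀ j := by rw [habs]; ring
    · -- q₀ j > 0
      have habs : |q₀ j| = q₀ j := abs_of_pos hpos
      have hkey := hw_key x hx (qd j) (q₀ j) hpos (by rw [habs] at hlarge; exact hlarge)
      have hbx : (q₀ j) ^ x = |q₀ j| ^ x := by rw [habs]
      rw [hbx] at hkey
      have hkey' : c * |q₀ j| ^ x ≤ A - B := by rw [hc, hA, hB]; linarith [hkey]
      calc c * (|q₀ j| ^ x * |q₀ j|) = (c * |q₀ j| ^ x) * |q₀ j| := by ring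
        _ ≤ (A - B) * |q₀ j| :=
            mul_le_mul_of_nonneg_right hkey' (abs_nonneg _)
        _ = (A - B) * q₀ j := by rw [habs]
  -- combine
  rw [hint]
  have hrhs : x * r j * |q₀ j| ^ (x + 1) * (((3/4 : ℝ) ^ x - (1/4 : ℝ) ^ x) / x) =
      r j * (((3/4 : ℝ) ^ x - (1/4 : ℝ) ^ x) * |q₀ j| ^ (x + 1)) := by
    field_simp
  rw [hrhs]
  calc r j * (((3/4 : ℝ) ^ x - (1/4 : ℝ) ^ x) * |q₀ j| ^ (x + 1))
      ≤ (f (qd + q₀) - f qd) j * q₀ j := hjterm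
    _ ≤ (f (qd + q₀) - f qd) ⬝ᵥ q₀ := hsum
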